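/- Let M be a connected simple matroid of rank 3 on a finite ground set E with rank function r. Suppose x, y ∈ E are distinct elements such that every facet-defining flat F of rank 2 of M contains x if and only if it contains y, and such that r(E \ {x,y}) = 3. Then M is 2-decomposable by the hyperplane ({x,y},1)_=. -/

import Mathlib

open Set Matroid

namespace PaperWMO

variable {α : Type*}

/-- The rank of a set `X` in a matroid `M`: the size of a largest independent subset of `X`. -/
noncomputable def rk (M : Matroid α) (X : Set α) : ℕ :=
  sSup {n : ℕ | ∃ I, M.Indep I ∧ I ⊆ X ∧ I.ncard = n}

/-- Contraction of the set `C` in the matroid `M`, defined by duality: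
`M / C = (M✶ \ C)✶`, where deletion is restriction to the complement. -/
noncomputable def contract (M : Matroid α) (C : Set α) : Matroid α :=
  (M✶ ↾ (M.E \ C))✶

/-- A matroid is connected if its ground set is nonempty and it is not the direct sum of
two matroids on nonempty disjoint ground sets. -/
def Conn (M : Matroid α) : Prop :=
  M.E.Nonempty ∧ ¬ ∃ (M₁ M₂ : Matroid α) (h : Disjoint M₁.E M₂.E),
    M₁.E.Nonempty ∧ M₂.E.Nonempty ∧ M = Matroid.disjointSum M₁ M₂ h

/-- A flat of `M`: a subset `F` of the ground set such that any superset
`B` with `F ⊆ B ⊆ M.E` of the same rank equals `F`. -/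
def IsFlat (M : Matroid α) (F : Set α) : Prop :=
  F ⊆ M.E ∧ ∀ B : Set α, F ⊆ B → B ⊆ M.E → rk M B = rk M F → B = F

/-- A matroid is simple if every subset of the ground set with at most two elements
is independent. -/
def IsSimple (M : Matroid α) : Prop :=
  ∀ X ⊆ M.E, X.ncard ≤ 2 → M.Indep X

/-- A facet-defining flat of rank 2: a flat `F` of rank 2 such that
both the restriction `M ↾ F` and the contraction `M / F` are connected. -/
def FacetFlat2 (M : Matroid α) (F : Set α) : Prop :=
  IsFlat M F ∧ rk M F = 2 ∧ Conn (M ↾ F) ∧ Conn (contract M F)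

/-- `M` is 2-decomposable by the hyperplane `(A, a)_=`. -/
def TwoDecomposableBy (M : Matroid α) (A : Set α) (a : ℕ) : Prop :=
  (∃ N₁ : Matroid α, N₁.E = M.E ∧
      ∀ B : Set α, N₁.IsBase B ↔ M.IsBase B ∧ (B ∩ A).ncard ≤ a) ∧
  (∃ N₂ : Matroid α, N₂.E = M.E ∧
      ∀ B : Set α, N₂.IsBase B ↔ M.IsBase B ∧ a ≤ (B ∩ A).ncard) ∧
  (∃ B : Set α, M.IsBase B ∧ a < (B ∩ A).ncard) ∧
  (∃ B : Set α, M.IsBase B ∧ (B ∩ A).ncard < a)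

/-- A 3-partition in `M`: a partition of the ground set into three parts, each of size
at least two, such that no facet-defining flat of rank 2 meets all three parts, and the
union of any two parts has rank 3. -/
def ThreePartition (M : Matroid α) (A₁ A₂ A₃ : Set α) : Prop :=
  A₁ ∪ A₂ ∪ A₃ = M.E ∧
  Disjoint A₁ A₂ ∧ Disjoint A₂ A₃ ∧ Disjoint A₁ A₃ ∧
  2 ≤ A₁.ncard ∧ 2 ≤ A₂.ncard ∧ 2 ≤ A₃.ncard ∧
  (¬ ∃ F : Set α, FacetFlat2 M F ∧
      (F ∩ A₁).Nonempty ∧ (F ∩ A₂).Nonempty ∧ (F ∩ A₃).Nonempty) ∧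
  rk M (A₁ ∪ A₂) = 3 ∧ rk M (A₂ ∪ A₃) = 3 ∧ rk M (A₃ ∪ A₁) = 3

/-- The adjacency relation of the graph `g(A, B)` (with respect to the matroid `M`):
the vertex set is `B`, and distinct `x, y ∈ B` are adjacent iff some facet-defining flat
of rank 2 of `M` contains both `x` and `y` and meets `A`. -/
def gAdj (M : Matroid α) (A B : Set α) (x y : α) : Prop :=
  x ∈ B ∧ y ∈ B ∧ x ≠ y ∧
    ∃ F : Set α, FacetFlat2 M F ∧ x ∈ F ∧ y ∈ F ∧ (F ∩ A).Nonempty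

/-- `C` is the vertex set of a connected component of the graph `g(S, V)`. -/
def IsGComponent (M : Matroid α) (S V C : Set α) : Prop :=
  ∃ x ∈ V, C = {y | y ∈ V ∧ Relation.ReflTransGen (gAdj M S V) x y}

lemma rk_set_bddAbove (M : Matroid α) (hfin : M.E.Finite) (X : Set α) :
    BddAbove {n : ℕ | ∃ I, M.Indep I ∧ I ⊆ X ∧ I.ncard = n} := by
  refine ⟨M.E.ncard, fun n hn => ?_⟩
  obtain ⟨I, hI, -, rfl⟩ := hn
  exact Set.ncard_le_ncard hI.subset_ground hfin

lemma rk_set_nonempty (M : Matroid α) (X : Set α) :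
    {n : ℕ | ∃ I, M.Indep I ∧ I ⊆ X ∧ I.ncard = n}.Nonempty :=
  ⟨0, ∅, M.empty_indep, empty_subset _, Set.ncard_empty _⟩

lemma le_rk (M : Matroid α) (hfin : M.E.Finite) {X : Set α} {I : Set α}
    (hI : M.Indep I) (hIX : I ⊆ X) : I.ncard ≤ rk M X :=
  le_csSup (rk_set_bddAbove M hfin X) ⟨I, hI, hIX, rfl⟩

lemma rk_le (M : Matroid α) {X : Set α} {n : ℕ}
    (h : ∀ I, M.Indep I → I ⊆ X → I.ncard ≤ n) : rk M X ≤ n := by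
  refine csSup_le (rk_set_nonempty M X) ?_
  rintro m ⟨I, hI, hIX, rfl⟩
  exact h I hI hIX

lemma exists_rk_witness (M : Matroid α) (hfin : M.E.Finite) (X : Set α) :
    ∃ I, M.Indep I ∧ I ⊆ X ∧ I.ncard = rk M X :=
  Nat.sSup_mem (rk_set_nonempty M X) (rk_set_bddAbove M hfin X)

section Rank3
variable {M : Matroid α} (hfin : M.E.Finite) (hrank : rk M M.E = 3)
include hfin hrank

lemma indep_ncard_le_three {I : Set α} (hI : M.Indep I) : I.ncard ≤ 3 := by
  rw [← hrank]; exact le_rk M hfin hI hI.subset_ground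

lemma base_of_indep_ncard {I : Set α} (hI : M.Indep I) (hI3 : I.ncard = 3) : M.IsBase I := by
  obtain ⟨B, hB, hIB⟩ := hI.exists_isBase_superset
  have hBfin : B.Finite := hfin.subset hB.subset_ground
  have : I = B := Set.eq_of_subset_of_ncard_le hIB
    (by rw [hI3]; exact indep_ncard_le_three hfin hrank hB.indep) hBfin
  rwa [this]

lemma base_ncard_three {B : Set α} (hB : M.IsBase B) : B.ncard = 3 := by
  obtain ⟨I, hI, hIE, hI3⟩ := exists_rk_witness M hfin M.E
  rw [hrank] at hI3
  have hIbase : M.IsBase I := base_of_indep_ncard hfin hrank hI hI3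
  have := hB.encard_eq_encard_of_isBase hIbase
  rw [Set.ncard_def, this, ← Set.ncard_def, hI3]

lemma base_iff_indep_ncard {B : Set α} : M.IsBase B ↔ M.Indep B ∧ B.ncard = 3 :=
  ⟨fun h => ⟨h.indep, base_ncard_three hfin hrank h⟩,
   fun h => base_of_indep_ncard hfin hrank h.1 h.2⟩

end Rank3

lemma simple_pair_indep {M : Matroid α} (hsimple : IsSimple M) {a b : α}
    (ha : a ∈ M.E) (hb : b ∈ M.E) : M.Indep {a, b} := by
  refine hsimple _ ?_ ?_
  · exact Set.insert_subset ha (Set.singleton_subset_iff.mpr hb)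
  · exact le_trans (Set.ncard_insert_le _ _) (by simp)

section Facet

variable {M : Matroid α} (hfin : M.E.Finite) (hrank : rk M M.E = 3)
  {a b : α} (hab : a ≠ b) (hIab : M.Indep {a, b})

include hfin hrank hab hIab

lemma indep_subset_closure_pair {I : Set α} (hI : M.Indep I)
    (hIF : I ⊆ M.closure {a, b}) : I.ncard ≤ 2 := by
  by_contra hcon
  push_neg at hcon
  have h3 : I.ncard = 3 := le_antisymm (indep_ncard_le_three hfin hrank hI) hcon
  have hIbase : M.IsBase I := base_of_indep_ncard hfin hrank hI h3
  have hEcl : M.E ⊆ M.closure {a, b} := by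
    rw [← hIbase.closure_eq]
    exact (M.closure_subset_closure hIF).trans (by rw [M.closure_closure])
  have hFE : M.closure {a, b} = M.E := le_antisymm (M.closure_subset_ground _) hEcl
  have hbase : M.IsBase {a, b} := by
    rw [← isBasis_ground_iff, ← hFE]
    exact hIab.isBasis_closure
  have := base_ncard_three hfin hrank hbase
  rw [Set.ncard_pair hab] at this
  omega

lemma rk_closure_pair : rk M (M.closure {a, b}) = 2 := by
  refine le_antisymm (rk_le M (fun I hI hIF => indep_subset_closure_pair hfin hrank hab hIab hI hIF)) ?_
  have := le_rk M hfin hIab (M.subset_closure {a, b} hIab.subset_ground)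
  rwa [Set.ncard_pair hab] at this

lemma flat_closure_pair : IsFlat M (M.closure {a, b}) := by
  refine ⟨M.closure_subset_ground _, fun B hFB hBE hrkB => ?_⟩
  rw [rk_closure_pair hfin hrank hab hIab] at hrkB
  refine subset_antisymm ?_ hFB
  by_contra hcon
  obtain ⟨z, hzB, hzF⟩ := Set.not_subset.mp hcon
  have hzab : z ∉ ({a, b} : Set α) :=
    fun h => hzF (M.subset_closure {a, b} hIab.subset_ground h)
  have hind : M.Indep (insert z {a, b}) := by
    rw [hIab.insert_indep_iff_of_notMem hzab]
    exact ⟨hBE hzB, hzF⟩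
  have hsub : insert z {a, b} ⊆ B :=
    Set.insert_subset hzB ((M.subset_closure {a, b} hIab.subset_ground).trans hFB)
  have h3 : (insert z {a, b} : Set α).ncard = 3 := by
    rw [Set.ncard_insert_of_notMem hzab (hfin.subset hIab.subset_ground),
      Set.ncard_pair hab]
  have := le_rk M hfin hind hsub
  rw [h3, hrkB] at this
  omega

lemma basis_pair_closure (hsimple : IsSimple M) {u v : α}
    (hu : u ∈ M.closure {a, b}) (hv : v ∈ M.closure {a, b}) (huv : u ≠ v) :
    (M ↾ M.closure {a, b}).IsBase {u, v} := by
  have hFE := M.closure_subset_ground {a, b}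
  rw [isBase_restrict_iff hFE]
  have hpair : M.Indep {u, v} := simple_pair_indep hsimple (hFE hu) (hFE hv)
  refine hpair.isBasis_of_forall_insert
    (Set.insert_subset hu (Set.singleton_subset_iff.mpr hv)) ?_
  rintro w ⟨hwF, hwuv⟩
  refine ⟨fun hind => ?_, Set.insert_subset (hFE hwF)
    (Set.insert_subset (hFE hu) (Set.singleton_subset_iff.mpr (hFE hv)))⟩
  have h3 : (insert w {u, v} : Set α).ncard = 3 := by
    rw [Set.ncard_insert_of_notMem hwuv (hfin.subset hpair.subset_ground),
      Set.ncard_pair huv]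
  have := indep_subset_closure_pair hfin hrank hab hIab hind
    (Set.insert_subset hwF (Set.insert_subset hu (Set.singleton_subset_iff.mpr hv)))
  omega

lemma conn_restrict_closure (hsimple : IsSimple M) {c : α}
    (hc : c ∈ M.closure {a, b}) (hca : c ≠ a) (hcb : c ≠ b) :
    Conn (M ↾ M.closure {a, b}) := by
  have hFE := M.closure_subset_ground {a, b}
  have haF : a ∈ M.closure {a, b} :=
    M.subset_closure {a, b} hIab.subset_ground (by simp)
  have hbF : b ∈ M.closure {a, b} :=
    M.subset_closure {a, b} hIab.subset_ground (by simp)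
  constructor
  · exact ⟨a, by rwa [restrict_ground_eq]⟩
  rintro ⟨M₁, M₂, hd, ⟨e, he⟩, ⟨f, hf⟩, heq⟩
  have hground : M.closure {a, b} = M₁.E ∪ M₂.E := by
    rw [← restrict_ground_eq (M := M) (R := M.closure {a, b}), heq, disjointSum_ground_eq]
  have hef : e ≠ f := fun h => Set.disjoint_left.mp hd he (h ▸ hf)
  have heF : e ∈ M.closure {a, b} := hground ▸ Set.mem_union_left _ he
  have hfF : f ∈ M.closure {a, b} := hground ▸ Set.mem_union_right _ hf
  have hg : ∃ g ∈ M.closure {a, b}, g ≠ e ∧ g ≠ f := by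
    by_contra h
    push_neg at h
    have key : ∀ g, g ∈ M.closure {a, b} → g = e ∨ g = f := fun g hgF => by
      by_cases hge : g = e
      · exact Or.inl hge
      · exact Or.inr (h g hgF hge)
    rcases key a haF with rfl | rfl <;> rcases key b hbF with rfl | rfl <;>
      rcases key c hc with h2 | h2 <;> simp_all
  obtain ⟨g, hgF, hge, hgf⟩ := hg
  have hbase_ef := basis_pair_closure hfin hrank hab hIab hsimple heF hfF hef
  rw [heq, disjointSum_isBase_iff] at hbase_ef
  obtain ⟨h1, h2, -⟩ := hbase_ef
  have hef1 : ({e, f} : Set α) ∩ M₁.E = {e} := by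
    ext z
    simp only [Set.mem_inter_iff, Set.mem_insert_iff, Set.mem_singleton_iff]
    constructor
    · rintro ⟨rfl | rfl, hz⟩
      · rfl
      · exact absurd hz (Set.disjoint_right.mp hd hf)
    · rintro rfl; exact ⟨Or.inl rfl, he⟩
  have hef2 : ({e, f} : Set α) ∩ M₂.E = {f} := by
    ext z
    simp only [Set.mem_inter_iff, Set.mem_insert_iff, Set.mem_singleton_iff]
    constructor
    · rintro ⟨rfl | rfl, hz⟩
      · exact absurd hz (Set.disjoint_left.mp hd he)
      · rfl
    · rintro rfl; exact ⟨Or.inr rfl, hf⟩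
  rw [hef1] at h1
  rw [hef2] at h2
  have hgEU : g ∈ M₁.E ∪ M₂.E := hground ▸ hgF
  rcases hgEU with hg1 | hg2
  · have hbase_eg := basis_pair_closure hfin hrank hab hIab hsimple heF hgF (Ne.symm hge)
    rw [heq, disjointSum_isBase_iff] at hbase_eg
    obtain ⟨-, h4, -⟩ := hbase_eg
    have : ({e, g} : Set α) ∩ M₂.E = ∅ := by
      rw [Set.eq_empty_iff_forall_notMem]
      rintro z ⟨hz1, hz2⟩
      rcases hz1 with rfl | rfl
      · exact Set.disjoint_left.mp hd he hz2
      · exact Set.disjoint_left.mp hd hg1 hz2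
    rw [this] at h4
    exact Set.singleton_ne_empty f (h4.eq_of_subset_isBase h2 (Set.empty_subset _)).symm
  · have hbase_fg := basis_pair_closure hfin hrank hab hIab hsimple hfF hgF (Ne.symm hgf)
    rw [heq, disjointSum_isBase_iff] at hbase_fg
    obtain ⟨h4, -, -⟩ := hbase_fg
    have : ({f, g} : Set α) ∩ M₁.E = ∅ := by
      rw [Set.eq_empty_iff_forall_notMem]
      rintro z ⟨hz1, hz2⟩
      rcases hz1 with rfl | rfl
      · exact Set.disjoint_left.mp hd hz2 hf
      · exact Set.disjoint_left.mp hd hz2 hg2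
    rw [this] at h4
    exact Set.singleton_ne_empty e (h4.eq_of_subset_isBase h1 (Set.empty_subset _)).symm

omit hfin hrank hab hIab in
lemma contract_ground (M : Matroid α) (C : Set α) : (contract M C).E = M.E \ C := rfl

lemma singleton_base_contract {e : α} (he : e ∈ M.E \ M.closure {a, b}) :
    (contract M (M.closure {a, b})).IsBase {e} := by
  have hXE : M.E \ M.closure {a, b} ⊆ M✶.E := by
    rw [dual_ground]; exact Set.diff_subset
  show ((M✶ ↾ (M.E \ M.closure {a, b}))✶).IsBase {e}
  rw [dual_isBase_iff (by rw [restrict_ground_eq]; exact Set.singleton_subset_iff.mpr he),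
    restrict_ground_eq, isBase_restrict_iff hXE]
  have hab_sub := hIab.subset_ground
  refine Indep.isBasis_of_forall_insert ?_ Set.diff_subset ?_
  · rw [dual_indep_iff_exists (show (M.E \ M.closure {a, b}) \ {e} ⊆ M.E from Set.diff_subset.trans Set.diff_subset)]
    have heab : e ∉ ({a, b} : Set α) := fun h =>
      he.2 (M.subset_closure {a, b} hab_sub h)
    have hind : M.Indep (insert e {a, b}) := by
      rw [hIab.insert_indep_iff_of_notMem heab]
      exact he
    have h3 : (insert e {a, b} : Set α).ncard = 3 := by
      rw [Set.ncard_insert_of_notMem heab (hfin.subset hab_sub), Set.ncard_pair hab]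
    refine ⟨insert e {a, b}, base_of_indep_ncard hfin hrank hind h3, ?_⟩
    rw [Set.disjoint_right]
    rintro z (rfl | hz)
    · exact fun h => h.2 rfl
    · intro h
      exact h.1.2 (M.subset_closure {a, b} hab_sub hz)
  · rintro z ⟨hz1, hz2⟩
    have hze : z = e := by
      by_contra hne
      exact hz2 ⟨hz1, hne⟩
    subst hze
    rw [Set.insert_diff_singleton, Set.insert_eq_self.mpr he]
    refine ⟨fun hind => ?_, hXE⟩
    rw [dual_indep_iff_exists (show M.E \ M.closure {a, b} ⊆ M.E from Set.diff_subset)] at hind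
    obtain ⟨B, hB, hdisj⟩ := hind
    have hBF : B ⊆ M.closure {a, b} := fun z hz => by
      by_contra hzF
      exact Set.disjoint_right.mp hdisj hz ⟨hB.subset_ground hz, hzF⟩
    have := indep_subset_closure_pair hfin hrank hab hIab hB.indep hBF
    have h3 := base_ncard_three hfin hrank hB
    omega

lemma conn_contract_closure : Conn (contract M (M.closure {a, b})) := by
  constructor
  · obtain ⟨B, hB⟩ := M.exists_isBase
    have h3 := base_ncard_three hfin hrank hB
    have : ¬B ⊆ M.closure {a, b} := fun hsub => by
      have := indep_subset_closure_pair hfin hrank hab hIab hB.indep hsub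
      omega
    obtain ⟨e, heB, heF⟩ := Set.not_subset.mp this
    exact ⟨e, by rw [contract_ground]; exact ⟨hB.subset_ground heB, heF⟩⟩
  rintro ⟨M₁, M₂, hd, ⟨e, he⟩, ⟨f, hf⟩, heq⟩
  have hground : M.E \ M.closure {a, b} = M₁.E ∪ M₂.E := by
    rw [← contract_ground M (M.closure {a, b}), heq, disjointSum_ground_eq]
  have heM : e ∈ M.E \ M.closure {a, b} := hground ▸ Set.mem_union_left _ he
  have hfM : f ∈ M.E \ M.closure {a, b} := hground ▸ Set.mem_union_right _ hf
  have hbe := singleton_base_contract hfin hrank hab hIab heM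
  have hbf := singleton_base_contract hfin hrank hab hIab hfM
  rw [heq, disjointSum_isBase_iff] at hbe hbf
  obtain ⟨-, hbe2, -⟩ := hbe
  obtain ⟨-, hbf2, -⟩ := hbf
  rw [Set.singleton_inter_eq_empty.mpr (Set.disjoint_left.mp hd he)] at hbe2
  rw [Set.inter_eq_self_of_subset_left (Set.singleton_subset_iff.mpr hf)] at hbf2
  exact Set.singleton_ne_empty f (hbe2.eq_of_subset_isBase hbf2 (Set.empty_subset _)).symm

lemma facetFlat2_closure_pair (hsimple : IsSimple M) {c : α}
    (hc : c ∈ M.closure {a, b}) (hca : c ≠ a) (hcb : c ≠ b) :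
    FacetFlat2 M (M.closure {a, b}) :=
  ⟨flat_closure_pair hfin hrank hab hIab, rk_closure_pair hfin hrank hab hIab,
    conn_restrict_closure hfin hrank hab hIab hsimple hc hca hcb,
    conn_contract_closure hfin hrank hab hIab⟩

end Facet

section Exchange

variable {M : Matroid α} {p q : α} (hfin : M.E.Finite) (hsimple : IsSimple M)
  (hrank : rk M M.E = 3) (hpq : p ≠ q) (hp : p ∈ M.E) (hq : q ∈ M.E)
  (hswap : ∀ u v : α, u ∈ M.E → v ∈ M.E → u ∉ ({p, q} : Set α) → v ∉ ({p, q} : Set α) →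
    u ≠ v → (p ∈ M.closure {u, v} ↔ q ∈ M.closure {u, v}))

include hfin hsimple hrank hpq hp hq hswap

lemma exch_hard1 {B₁ B₂ : Set α} (hB₁ : M.IsBase B₁) (h1 : B₁ ∩ {p, q} = {p})
    (hB₂ : M.IsBase B₂) (hc2 : (B₂ ∩ ({p, q} : Set α)).ncard ≤ 1)
    {t : α} (ht : t ∈ B₁ \ B₂) (htp : t ≠ p) :
    ∃ s ∈ B₂ \ B₁, M.IsBase (insert s (B₁ \ {t})) ∧
      ((insert s (B₁ \ {t})) ∩ ({p, q} : Set α)).ncard ≤ 1 := by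
  have hpB₁ : p ∈ B₁ := by
    have : p ∈ B₁ ∩ {p, q} := h1 ▸ rfl
    exact this.1
  have hqB₁ : q ∉ B₁ := fun h => by
    have : q ∈ B₁ ∩ {p, q} := ⟨h, Or.inr rfl⟩
    rw [h1] at this
    exact hpq this.symm
  obtain ⟨s, hs, hsB⟩ := hB₁.exchange hB₂ ht
  have hbound : ∀ s' : α, s' ∉ ({p, q} : Set α) →
      ((insert s' (B₁ \ {t})) ∩ ({p, q} : Set α)).ncard ≤ 1 := by
    intro s' hs'
    have hsub : (insert s' (B₁ \ {t})) ∩ ({p, q} : Set α) ⊆ {p} := by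
      rintro z ⟨hz1, hz2⟩
      rcases hz1 with rfl | hz1
      · exact absurd hz2 hs'
      · have : z ∈ B₁ ∩ {p, q} := ⟨hz1.1, hz2⟩
        rw [h1] at this
        exact this
    simpa using Set.ncard_le_ncard hsub (Set.finite_singleton p)
  by_cases hsq : s = q
  · rw [hsq] at hs hsB
    -- the exchanged base contains q; find a replacement e ∉ {p, q}
    have hpB₂ : p ∉ B₂ := by
      intro hpB₂
      have hsub : ({p, q} : Set α) ⊆ B₂ ∩ {p, q} := by
        rintro z (rfl | rfl)
        · exact ⟨hpB₂, Or.inl rfl⟩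
        · exact ⟨hs.1, Or.inr rfl⟩
      have := Set.ncard_le_ncard hsub ((hfin.subset hB₂.subset_ground).inter_of_left _)
      rw [Set.ncard_pair hpq] at this
      omega
    have h3 : B₁.ncard = 3 := base_ncard_three hfin hrank hB₁
    have hB₁fin : B₁.Finite := hfin.subset hB₁.subset_ground
    have h2 : (B₁ \ {t}).ncard = 2 := by
      rw [Set.ncard_diff_singleton_of_mem ht.1, h3]
    obtain ⟨c, d, hcd, hcd_eq⟩ := Set.ncard_eq_two.mp h2
    have hpmem : p ∈ B₁ \ {t} := ⟨hpB₁, htp.symm⟩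
    obtain ⟨b, hb_eq, hbp⟩ : ∃ b, B₁ \ {t} = {p, b} ∧ b ≠ p := by
      rw [hcd_eq] at hpmem
      rcases hpmem with h | h
      · exact ⟨d, by rw [hcd_eq, ← h], fun hdp => hcd (by rw [hdp, h])⟩
      · exact ⟨c, by rw [hcd_eq, ← h, Set.pair_comm], fun hcp => hcd (by rw [hcp, h])⟩
    have hbB₁ : b ∈ B₁ := by
      have : b ∈ B₁ \ {t} := hb_eq ▸ Or.inr rfl
      exact this.1
    have hbq : b ≠ q := fun h => hqB₁ (h ▸ hbB₁)
    have hbpq : b ∉ ({p, q} : Set α) := by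
      rintro (h | h)
      · exact hbp h
      · exact hbq h
    obtain ⟨e, he, heq'⟩ : ∃ e ∈ B₂ \ B₁, e ≠ q := by
      by_contra hcon
      push_neg at hcon
      have hsub : B₂ ⊆ insert q (B₁ \ {t}) := by
        intro z hz
        by_cases hzB₁ : z ∈ B₁
        · exact Or.inr ⟨hzB₁, fun h => ht.2 (h ▸ hz)⟩
        · exact Or.inl (hcon z ⟨hz, hzB₁⟩)
      have h32 : B₂.ncard = 3 := base_ncard_three hfin hrank hB₂
      have hle : (insert q (B₁ \ {t})).ncard ≤ 3 := by
        have := Set.ncard_insert_le q (B₁ \ {t})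
        omega
      have hB₂eq : B₂ = insert q (B₁ \ {t}) :=
        Set.eq_of_subset_of_ncard_le hsub (by omega)
          ((hB₁fin.diff).insert q)
      rw [hB₂eq, hb_eq] at hpB₂
      exact hpB₂ (Or.inr (Or.inl rfl))
    have hepq : e ∉ ({p, q} : Set α) := by
      rintro (h | h)
      · exact he.2 (by rw [h]; exact hpB₁)
      · exact heq' h
    have hbe : b ≠ e := fun h => he.2 (h ▸ hbB₁)
    have hbE : b ∈ M.E := hB₁.subset_ground hbB₁
    have heE : e ∈ M.E := hB₂.subset_ground he.1
    have hIbe : M.Indep {b, e} := simple_pair_indep hsimple hbE heE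
    have hpcl : p ∉ M.closure {b, e} := by
      intro hpcl
      have hqcl : q ∈ M.closure {b, e} :=
        (hswap b e hbE heE hbpq hepq hbe).mp hpcl
      have hsub : insert q (B₁ \ {t}) ⊆ M.closure {b, e} := by
        rw [hb_eq]
        rintro z (rfl | rfl | h)
        · exact hqcl
        · exact hpcl
        · rw [h]
          exact M.subset_closure _ hIbe.subset_ground (Or.inl rfl)
      have hle := indep_subset_closure_pair hfin hrank hbe hIbe hsB.indep hsub
      have h33 := base_ncard_three hfin hrank hsB
      omega
    have hpbe : p ∉ ({b, e} : Set α) := by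
      rintro (h | h)
      · exact hbp h.symm
      · exact hepq (Or.inl h.symm)
    have hDeq : insert e (B₁ \ {t}) = insert p {b, e} := by
      rw [hb_eq]
      ext z
      simp only [Set.mem_insert_iff, Set.mem_singleton_iff]
      tauto
    have hDind : M.Indep (insert p {b, e}) := by
      rw [hIbe.insert_indep_iff_of_notMem hpbe]
      exact ⟨hp, hpcl⟩
    have hD3 : (insert p {b, e} : Set α).ncard = 3 := by
      rw [Set.ncard_insert_of_notMem hpbe (hfin.subset hIbe.subset_ground),
        Set.ncard_pair hbe]
    refine ⟨e, he, ?_, hbound e hepq⟩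
    rw [hDeq]
    exact base_of_indep_ncard hfin hrank hDind hD3
  · have hspq : s ∉ ({p, q} : Set α) := by
      rintro (h | h)
      · exact hs.2 (by rw [h]; exact hpB₁)
      · exact hsq h
    exact ⟨s, hs, hsB, hbound s hspq⟩

lemma exch_hard2 {B₁ B₂ : Set α} (hB₁ : M.IsBase B₁) (h1 : B₁ ∩ {p, q} = {p})
    (hB₂ : M.IsBase B₂) (hqB₂ : q ∈ B₂) (ht : p ∈ B₁ \ B₂) :
    q ∈ B₂ \ B₁ ∧ M.IsBase (insert q (B₁ \ {p})) := by
  have hqB₁ : q ∉ B₁ := fun h => by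
    have : q ∈ B₁ ∩ {p, q} := ⟨h, Or.inr rfl⟩
    rw [h1] at this
    exact hpq this.symm
  have h3 : B₁.ncard = 3 := base_ncard_three hfin hrank hB₁
  have hB₁fin : B₁.Finite := hfin.subset hB₁.subset_ground
  have h2 : (B₁ \ {p}).ncard = 2 := by
    rw [Set.ncard_diff_singleton_of_mem ht.1, h3]
  obtain ⟨c, d, hcd, hcd_eq⟩ := Set.ncard_eq_two.mp h2
  have hcB₁ : c ∈ B₁ ∧ c ≠ p := by
    have : c ∈ B₁ \ {p} := hcd_eq ▸ Or.inl rfl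
    exact ⟨this.1, this.2⟩
  have hdB₁ : d ∈ B₁ ∧ d ≠ p := by
    have : d ∈ B₁ \ {p} := hcd_eq ▸ Or.inr rfl
    exact ⟨this.1, this.2⟩
  have hcpq : c ∉ ({p, q} : Set α) := by
    rintro (h | h)
    · exact hcB₁.2 h
    · exact hqB₁ (h ▸ hcB₁.1)
  have hdpq : d ∉ ({p, q} : Set α) := by
    rintro (h | h)
    · exact hdB₁.2 h
    · exact hqB₁ (h ▸ hdB₁.1)
  have hpcd : p ∉ ({c, d} : Set α) := by
    rintro (h | h)
    · exact hcB₁.2 h.symm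
    · exact hdB₁.2 h.symm
  have hqcd : q ∉ ({c, d} : Set α) := by
    rintro (h | h)
    · exact hqB₁ (h.symm ▸ hcB₁.1)
    · exact hqB₁ (h.symm ▸ hdB₁.1)
  have hcE : c ∈ M.E := hB₁.subset_ground hcB₁.1
  have hdE : d ∈ M.E := hB₁.subset_ground hdB₁.1
  have hIcd : M.Indep {c, d} := simple_pair_indep hsimple hcE hdE
  have hB₁eq : B₁ = insert p (B₁ \ {p}) := by
    rw [Set.insert_diff_singleton, Set.insert_eq_self.mpr ht.1]
  have hpcl : p ∉ M.closure {c, d} := by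
    intro hpcl
    have hB₁ind := hB₁.indep
    rw [hB₁eq, hcd_eq] at hB₁ind
    rw [hIcd.insert_indep_iff_of_notMem hpcd] at hB₁ind
    exact hB₁ind.2 hpcl
  have hqcl : q ∉ M.closure {c, d} := fun h =>
    hpcl ((hswap c d hcE hdE hcpq hdpq hcd).mpr h)
  have hqind : M.Indep (insert q {c, d}) := by
    rw [hIcd.insert_indep_iff_of_notMem hqcd]
    exact ⟨hq, hqcl⟩
  have hq3 : (insert q {c, d} : Set α).ncard = 3 := by
    rw [Set.ncard_insert_of_notMem hqcd (hfin.subset hIcd.subset_ground),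
      Set.ncard_pair hcd]
  refine ⟨⟨hqB₂, hqB₁⟩, ?_⟩
  rw [hcd_eq]
  exact base_of_indep_ncard hfin hrank hqind hq3

end Exchange

section Swap

variable {M : Matroid α} {x y : α} (hfin : M.E.Finite) (hsimple : IsSimple M)
  (hrank : rk M M.E = 3)
  (hsame : ∀ F : Set α, FacetFlat2 M F → (x ∈ F ↔ y ∈ F))

include hfin hsimple hrank hsame

lemma closure_swap {u v : α} (hu : u ∈ M.E) (hv : v ∈ M.E)
    (hupq : u ∉ ({x, y} : Set α)) (hvpq : v ∉ ({x, y} : Set α)) (huv : u ≠ v) :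
    (x ∈ M.closure {u, v} ↔ y ∈ M.closure {u, v}) := by
  have hIuv : M.Indep {u, v} := simple_pair_indep hsimple hu hv
  have hxu : x ≠ u := fun h => hupq (Or.inl h.symm)
  have hxv : x ≠ v := fun h => hvpq (Or.inl h.symm)
  have hyu : y ≠ u := fun h => hupq (Or.inr h.symm)
  have hyv : y ≠ v := fun h => hvpq (Or.inr h.symm)
  constructor
  · intro hxc
    exact (hsame _ (facetFlat2_closure_pair hfin hrank huv hIuv hsimple hxc hxu hxv)).mp hxc
  · intro hyc
    exact (hsame _ (facetFlat2_closure_pair hfin hrank huv hIuv hsimple hyc hyu hyv)).mpr hyc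

end Swap

/-- If two distinct elements `x, y` lie in exactly the same facet-defining flats of rank 2
and `r(E \ {x,y}) = 3`, then `M` is 2-decomposable by the hyperplane `({x,y},1)_=`. -/
theorem twoDecomposable_of_parallel_facets (M : Matroid α) (hfin : M.E.Finite)
    (hconn : Conn M) (hsimple : IsSimple M) (hrank : rk M M.E = 3)
    (x y : α) (hx : x ∈ M.E) (hy : y ∈ M.E) (hxy : x ≠ y)
    (hsame : ∀ F : Set α, FacetFlat2 M F → (x ∈ F ↔ y ∈ F))
    (hr : rk M (M.E \ {x, y}) = 3) :
    TwoDecomposableBy M {x, y} 1 := by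
  have hswapxy : ∀ u v : α, u ∈ M.E → v ∈ M.E → u ∉ ({x, y} : Set α) →
      v ∉ ({x, y} : Set α) → u ≠ v → (x ∈ M.closure {u, v} ↔ y ∈ M.closure {u, v}) :=
    fun u v hu hv h1 h2 h3 => closure_swap hfin hsimple hrank hsame hu hv h1 h2 h3
  have hswapyx : ∀ u v : α, u ∈ M.E → v ∈ M.E → u ∉ ({y, x} : Set α) →
      v ∉ ({y, x} : Set α) → u ≠ v → (y ∈ M.closure {u, v} ↔ x ∈ M.closure {u, v}) := by
    intro u v hu hv h1 h2 h3
    rw [Set.pair_comm y x] at h1 h2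
    exact (hswapxy u v hu hv h1 h2 h3).symm
  have hxyfin : ({x, y} : Set α).Finite := (Set.finite_singleton y).insert x
  -- the base containing both x and y
  have hIxy : M.Indep {x, y} := simple_pair_indep hsimple hx hy
  obtain ⟨Bt, hBt, hBtsub⟩ := hIxy.exists_isBase_superset
  have hBt2 : Bt ∩ {x, y} = {x, y} := Set.inter_eq_self_of_subset_right hBtsub
  -- the base avoiding x and y
  obtain ⟨B₀, hB₀i, hB₀sub, hB₀card⟩ := exists_rk_witness M hfin (M.E \ {x, y})
  rw [hr] at hB₀card
  have hB₀ : M.IsBase B₀ := base_of_indep_ncard hfin hrank hB₀i hB₀card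
  have hB₀inter : B₀ ∩ {x, y} = ∅ := by
    rw [Set.eq_empty_iff_forall_notMem]
    rintro z ⟨hz1, hz2⟩
    exact (hB₀sub hz1).2 hz2
  -- exchange property for N₁
  have hexch₁ : Matroid.ExchangeProperty
      (fun B => M.IsBase B ∧ (B ∩ ({x, y} : Set α)).ncard ≤ 1) := by
    rintro B₁ B₂ ⟨hB₁, hc1⟩ ⟨hB₂, hc2⟩ t ht
    by_cases hcase : B₁ ∩ {x, y} ⊆ {t}
    · obtain ⟨s, hs, hsB⟩ := hB₁.exchange hB₂ ht
      refine ⟨s, hs, hsB, ?_⟩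
      have hsub : (insert s (B₁ \ {t})) ∩ {x, y} ⊆ {s} := by
        rintro z ⟨hz1, hz2⟩
        rcases hz1 with rfl | hz1
        · rfl
        · exact absurd (hcase ⟨hz1.1, hz2⟩) hz1.2
      simpa using Set.ncard_le_ncard hsub (Set.finite_singleton s)
    · obtain ⟨w, hw, hwt⟩ := Set.not_subset.mp hcase
      have hinterfin : (B₁ ∩ ({x, y} : Set α)).Finite := hxyfin.subset Set.inter_subset_right
      have h1 : B₁ ∩ {x, y} = {w} :=
        Set.eq_singleton_iff_unique_mem.mpr
          ⟨hw, fun z hz => (Set.ncard_le_one hinterfin).mp hc1 z hz w hw⟩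
      have htw : t ≠ w := fun h => hwt (by rw [← h]; rfl)
      rcases hw.2 with h | h
      · rw [h] at h1 htw
        exact exch_hard1 hfin hsimple hrank hxy hx hy hswapxy hB₁ h1 hB₂ hc2 ht htw
      · rw [h] at h1 htw
        have h1' : B₁ ∩ {y, x} = {y} := by rw [Set.pair_comm y x]; exact h1
        have hc2' : (B₂ ∩ ({y, x} : Set α)).ncard ≤ 1 := by rwa [Set.pair_comm y x]
        obtain ⟨s, hs, hsB, hbd⟩ :=
          exch_hard1 hfin hsimple hrank hxy.symm hy hx hswapyx hB₁ h1' hB₂ hc2' ht htw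
        rw [Set.pair_comm y x] at hbd
        exact ⟨s, hs, hsB, hbd⟩
  -- exchange property for N₂
  have hexch₂ : Matroid.ExchangeProperty
      (fun B => M.IsBase B ∧ 1 ≤ (B ∩ ({x, y} : Set α)).ncard) := by
    rintro B₁ B₂ ⟨hB₁, hc1⟩ ⟨hB₂, hc2⟩ t ht
    by_cases hcase : ((B₁ \ {t}) ∩ ({x, y} : Set α)).Nonempty
    · obtain ⟨s, hs, hsB⟩ := hB₁.exchange hB₂ ht
      refine ⟨s, hs, hsB, ?_⟩
      obtain ⟨w, hw⟩ := hcase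
      have hmem : w ∈ (insert s (B₁ \ {t})) ∩ {x, y} := ⟨Or.inr hw.1, hw.2⟩
      have hfin' : ((insert s (B₁ \ {t})) ∩ ({x, y} : Set α)).Finite :=
        hxyfin.subset Set.inter_subset_right
      have := (Set.ncard_pos hfin').mpr ⟨w, hmem⟩
      omega
    · have hne : (B₁ ∩ ({x, y} : Set α)).Nonempty :=
        Set.nonempty_of_ncard_ne_zero (by omega)
      obtain ⟨w, hw⟩ := hne
      have hwt : w = t := by
        by_contra h
        exact hcase ⟨w, ⟨⟨hw.1, fun hh => h (Set.mem_singleton_iff.mp hh)⟩, hw.2⟩⟩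
      subst hwt
      have hempty : (B₁ \ {w}) ∩ ({x, y} : Set α) = ∅ :=
        Set.not_nonempty_iff_eq_empty.mp hcase
      have h1gen : B₁ ∩ {x, y} = {w} := by
        refine Set.eq_singleton_iff_unique_mem.mpr ⟨hw, fun z hz => ?_⟩
        by_contra hzw
        have : z ∈ (B₁ \ {w}) ∩ ({x, y} : Set α) :=
          ⟨⟨hz.1, fun hh => hzw (Set.mem_singleton_iff.mp hh)⟩, hz.2⟩
        rw [hempty] at this
        exact this
      have hB₂ne : (B₂ ∩ ({x, y} : Set α)).Nonempty :=
        Set.nonempty_of_ncard_ne_zero (by omega)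
      obtain ⟨z, hz⟩ := hB₂ne
      rcases hw.2 with h | h
      · rw [h] at h1gen ht ⊢
        -- w = x; y ∈ B₂
        have hyB₂ : y ∈ B₂ := by
          rcases hz.2 with hzx | hzy
          · exact absurd (hzx ▸ hz.1) ht.2
          · exact hzy ▸ hz.1
        obtain ⟨hyd, hbase⟩ :=
          exch_hard2 hfin hsimple hrank hxy hx hy hswapxy hB₁ h1gen hB₂ hyB₂ ht
        refine ⟨y, hyd, hbase, ?_⟩
        have hmem : y ∈ (insert y (B₁ \ {x})) ∩ ({x, y} : Set α) := ⟨Or.inl rfl, Or.inr rfl⟩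
        have hfin' : ((insert y (B₁ \ {x})) ∩ ({x, y} : Set α)).Finite :=
          hxyfin.subset Set.inter_subset_right
        have := (Set.ncard_pos hfin').mpr ⟨y, hmem⟩
        omega
      · rw [h] at h1gen ht ⊢
        -- w = y; x ∈ B₂
        have hxB₂ : x ∈ B₂ := by
          rcases hz.2 with hzx | hzy
          · exact hzx ▸ hz.1
          · exact absurd (hzy ▸ hz.1) ht.2
        have h1' : B₁ ∩ {y, x} = {y} := by rw [Set.pair_comm y x]; exact h1gen
        obtain ⟨hxd, hbase⟩ :=
          exch_hard2 hfin hsimple hrank hxy.symm hy hx hswapyx hB₁ h1' hB₂ hxB₂ ht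
        refine ⟨x, hxd, hbase, ?_⟩
        have hmem : x ∈ (insert x (B₁ \ {y})) ∩ ({x, y} : Set α) := ⟨Or.inl rfl, Or.inl rfl⟩
        have hfin' : ((insert x (B₁ \ {y})) ∩ ({x, y} : Set α)).Finite :=
          hxyfin.subset Set.inter_subset_right
        have := (Set.ncard_pos hfin').mpr ⟨x, hmem⟩
        omega
  refine ⟨⟨Matroid.ofIsBaseOfFinite hfin _ ⟨B₀, hB₀, by rw [hB₀inter]; simp⟩ hexch₁
      (fun B hB => hB.1.subset_ground), rfl, fun B => Iff.rfl⟩,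
    ⟨Matroid.ofIsBaseOfFinite hfin _ ⟨Bt, hBt, by rw [hBt2, Set.ncard_pair hxy]; omega⟩ hexch₂
      (fun B hB => hB.1.subset_ground), rfl, fun B => Iff.rfl⟩,
    ⟨Bt, hBt, by rw [hBt2, Set.ncard_pair hxy]; omega⟩,
    ⟨B₀, hB₀, by rw [hB₀inter]; simp⟩⟩

end PaperWMO
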